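/- Let κ be a Markov kernel on ℝ^m and c > 0 such that the log-Harnack inequality holds: for every bounded measurable f : ℝ^m → ℝ with f ≥ 1 and all x, x̄ ∈ ℝ^m, ∫ log f(y) κ(x,dy) ≤ log( ∫ f(y) κ(x̄,dy) ) + c |x − x̄|². Then for all probability measures ν, ν̄ on ℝ^m with finite second moments, Ent( νκ | ν̄κ ) ≤ c W₂(ν, ν̄)², where νκ denotes the probability measure (νκ)(A) = ∫ κ(x,A) ν(dx). -/

import Mathlib

open MeasureTheory ProbabilityTheory Filter
open scoped Topology
open scoped ENNReal NNReal

/-- A bounded measurable real-valued function. -/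
def BddMeasurableFn {E : Type*} [MeasurableSpace E] (f : E → ℝ) : Prop :=
  Measurable f ∧ ∃ C : ℝ, ∀ x, |f x| ≤ C

/-- `π` is a coupling of `μ` and `ν`. -/
def IsCoupling {α β : Type*} [MeasurableSpace α] [MeasurableSpace β]
    (π : Measure (α × β)) (μ : Measure α) (ν : Measure β) : Prop :=
  π.map Prod.fst = μ ∧ π.map Prod.snd = ν

/-- The squared `L²`-Wasserstein distance, as an extended nonnegative real. -/
noncomputable def W2sq {E : Type*} [MeasurableSpace E] [NormedAddCommGroup E]
    (μ ν : Measure E) : ℝ≥0∞ :=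
  ⨅ (π : Measure (E × E)) (_ : IsCoupling π μ ν), ∫⁻ p, (‖p.1 - p.2‖₊ : ℝ≥0∞) ^ 2 ∂π

/-- A probability measure with finite second moment (an element of `P₂`). -/
def MemP2 {E : Type*} [MeasurableSpace E] [NormedAddCommGroup E] (μ : Measure E) : Prop :=
  IsProbabilityMeasure μ ∧ ∫⁻ x, (‖x‖₊ : ℝ≥0∞) ^ 2 ∂μ < ∞

open Classical in
/-- The relative entropy `Ent(ν|μ) = ∫ log (dν/dμ) dν` if `ν ≪ μ` (and `+∞` otherwise). -/
noncomputable def relEnt {E : Type*} [MeasurableSpace E] (ν μ : Measure E) : ℝ≥0∞ :=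
  if ν ≪ μ ∧ Integrable (llr ν μ) ν then ENNReal.ofReal (∫ x, llr ν μ x ∂ν) else ∞

variable {α : Type*} [MeasurableSpace α]

lemma integrable_of_bdd {μ : Measure α} [IsFiniteMeasure μ] {g : α → ℝ} (hg : Measurable g)
    {C : ℝ} (hC : ∀ x, |g x| ≤ C) : Integrable g μ :=
  (integrable_const C).mono' hg.aestronglyMeasurable (Filter.Eventually.of_forall fun x => by
    simpa [Real.norm_eq_abs] using hC x)

lemma jensen_log {μ : Measure α} [IsProbabilityMeasure μ] {H : α → ℝ} (hH : Measurable H)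
    {C : ℝ} (hHC : ∀ x, H x ≤ C) (hH1 : ∀ x, 1 ≤ H x) :
    ∫ x, Real.log (H x) ∂μ ≤ Real.log (∫ x, H x ∂μ) := by
  have hHpos : ∀ x, (0:ℝ) < H x := fun x => lt_of_lt_of_le one_pos (hH1 x)
  have hHint : Integrable H μ := integrable_of_bdd hH (C := max C 1)
    (fun x => abs_le.2 ⟨le_trans (by norm_num : (-(max C 1) : ℝ) ≤ 0) (hHpos x).le,
      le_trans (hHC x) (le_max_left _ _)⟩)
  set T : ℝ := ∫ x, H x ∂μ with hT
  have hT1 : (1:ℝ) ≤ T := by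
    have := integral_mono (integrable_const (1:ℝ)) hHint hH1
    simpa using this
  have hTpos : (0:ℝ) < T := lt_of_lt_of_le one_pos hT1
  have hle : ∀ x, Real.log (H x) ≤ H x / T - 1 + Real.log T := by
    intro x
    have h1 : Real.log (H x / T) ≤ H x / T - 1 :=
      Real.log_le_sub_one_of_pos (div_pos (hHpos x) hTpos)
    have h2 : Real.log (H x / T) = Real.log (H x) - Real.log T :=
      Real.log_div (hHpos x).ne' hTpos.ne'
    linarith
  have hint2 : Integrable (fun x => H x / T - 1 + Real.log T) μ := by
    exact ((hHint.div_const T).sub (integrable_const 1)).add (integrable_const _)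
  have hlog_int : Integrable (fun x => Real.log (H x)) μ := by
    refine integrable_of_bdd (hH.log) (C := max |Real.log C| 1) (fun x => ?_)
    have h0 : 0 ≤ Real.log (H x) := Real.log_nonneg (hH1 x)
    have h1 : Real.log (H x) ≤ Real.log C :=
      Real.log_le_log (hHpos x) (hHC x)
    rw [abs_of_nonneg h0]
    exact le_trans h1 (le_trans (le_abs_self _) (le_max_left _ _))
  calc ∫ x, Real.log (H x) ∂μ ≤ ∫ x, (H x / T - 1 + Real.log T) ∂μ :=
        integral_mono hlog_int hint2 hle
    _ = T / T - 1 + Real.log T := by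
        have e : (fun x => H x / T - 1 + Real.log T)
            = fun x => H x * T⁻¹ + (Real.log T - 1) := by
          funext x; rw [div_eq_mul_inv]; ring
        rw [e, integral_add (hHint.mul_const _) (integrable_const _), integral_mul_const]
        simp [div_eq_mul_inv]; ring
    _ = Real.log T := by rw [div_self hTpos.ne']; ring

lemma ac_of_logHarnack {μ lam : Measure α} [IsProbabilityMeasure μ] [IsProbabilityMeasure lam]
    {B : ℝ}
    (hA : ∀ f : α → ℝ, Measurable f → (∀ x, 1 ≤ f x) → (∃ C, ∀ x, f x ≤ C) →
      ∫ y, Real.log (f y) ∂μ ≤ Real.log (∫ y, f y ∂lam) + B) : μ ≪ lam := by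
  refine Measure.AbsolutelyContinuous.mk fun A hAmeas hA0 => ?_
  by_contra hμA
  set ε : ℝ := (μ A).toReal with hε
  have hεpos : 0 < ε := ENNReal.toReal_pos hμA (measure_ne_top _ _)
  have key : ∀ n : ℕ, Real.log (1 + n) * ε ≤ B := by
    intro n
    set f : α → ℝ := fun y => 1 + (n : ℝ) * A.indicator (fun _ => (1:ℝ)) y with hf
    have hfmeas : Measurable f :=
      measurable_const.add ((measurable_const.indicator hAmeas).const_mul _)
    have hf1 : ∀ x, 1 ≤ f x := by
      intro x
      have : 0 ≤ A.indicator (fun _ => (1:ℝ)) x := Set.indicator_nonneg (fun _ _ => zero_le_one) x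
      simp only [hf]; nlinarith [Nat.cast_nonneg (α := ℝ) n]
    have hfC : ∃ C, ∀ x, f x ≤ C := by
      refine ⟨1 + n, fun x => ?_⟩
      have : A.indicator (fun _ => (1:ℝ)) x ≤ 1 :=
        Set.indicator_le_self' (fun _ _ => zero_le_one) x |>.trans (by
          by_cases hx : x ∈ A <;> simp [hx])
      simp only [hf]
      nlinarith [Nat.cast_nonneg (α := ℝ) n]
    have hlogf : (fun y => Real.log (f y)) = A.indicator (fun _ => Real.log (1 + n)) := by
      funext y
      by_cases hy : y ∈ A <;> simp [hf, hy]
    have hL : ∫ y, Real.log (f y) ∂μ = Real.log (1 + n) * ε := by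
      rw [hlogf, integral_indicator_const _ hAmeas]
      simp [hε, mul_comm, measureReal_def]
    have hR : ∫ y, f y ∂lam = 1 := by
      have : f =ᵐ[lam] fun _ => (1:ℝ) := by
        filter_upwards [measure_eq_zero_iff_ae_notMem.mp hA0] with y hy
        simp [hf, Set.indicator_of_notMem hy]
      rw [integral_congr_ae this]; simp
    have := hA f hfmeas hf1 hfC
    rw [hL, hR] at this
    simpa using this
  -- contradiction: log (1+n) → ∞
  set n : ℕ := ⌈Real.exp (B / ε)⌉₊ + 1 with hn
  have h1 : Real.exp (B / ε) < 1 + (n : ℝ) := by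
    have := Nat.le_ceil (Real.exp (B / ε))
    push_cast [hn]
    linarith
  have h2 : B / ε < Real.log (1 + n) := by
    rw [← Real.log_exp (B / ε)]
    exact Real.log_lt_log (Real.exp_pos _) h1
  have := key n
  have h3 : B < Real.log (1 + n) * ε := (div_lt_iff₀ hεpos).mp h2
  linarith

lemma coe_nnnorm_real (a : ℝ) : (‖a‖₊ : ℝ≥0∞) = ENNReal.ofReal a + ENNReal.ofReal (-a) := by
  rw [show (‖a‖₊ : ℝ≥0∞) = ENNReal.ofReal ‖a‖ from (ofReal_norm a).symm, Real.norm_eq_abs]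
  rcases le_total 0 a with h | h
  · rw [abs_of_nonneg h, ENNReal.ofReal_eq_zero.2 (by linarith : -a ≤ 0), add_zero]
  · rw [abs_of_nonpos h, ENNReal.ofReal_eq_zero.2 h, zero_add]

lemma log_nat_mono : Monotone fun n : ℕ => Real.log n := by
  intro a b hab
  rcases Nat.eq_zero_or_pos a with h0 | hpos
  · simpa [h0] using Real.log_natCast_nonneg b
  · exact Real.log_le_log (by exact_mod_cast hpos) (by exact_mod_cast hab)

lemma llr_integrable_and_bound {μ lam : Measure α} [IsProbabilityMeasure μ]
    [IsProbabilityMeasure lam] {B : ℝ} (hB : 0 ≤ B) (hAC : μ ≪ lam)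
    (hA : ∀ f : α → ℝ, Measurable f → (∀ x, 1 ≤ f x) → (∃ C, ∀ x, f x ≤ C) →
      ∫ y, Real.log (f y) ∂μ ≤ Real.log (∫ y, f y ∂lam) + B) :
    Integrable (llr μ lam) μ ∧ ∫ x, llr μ lam x ∂μ ≤ B := by
  set ρ : α → ℝ≥0∞ := μ.rnDeriv lam with hρ
  set t : α → ℝ := fun x => (ρ x).toReal with ht
  have hρm : Measurable ρ := Measure.measurable_rnDeriv _ _
  have htm : Measurable t := hρm.ennreal_toReal
  have hgm : Measurable (llr μ lam) := measurable_llr _ _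
  have hgdef : ∀ x, llr μ lam x = Real.log (t x) := fun x => rfl
  have htnn : ∀ x, 0 ≤ t x := fun x => ENNReal.toReal_nonneg
  have htint : Integrable t lam := Measure.integrable_toReal_rnDeriv
  have htint1 : ∫ x, t x ∂lam = 1 := by
    rw [ht, hρ, Measure.integral_toReal_rnDeriv hAC]; simp
  have hμ_eq : lam.withDensity ρ = μ := Measure.withDensity_rnDeriv_eq μ lam hAC
  -- negative part
  have hneg : ∫⁻ x, ENNReal.ofReal (-(Real.log (t x))) ∂μ ≤ 1 := by
    have hmeas : Measurable fun x => ENNReal.ofReal (-(Real.log (t x))) :=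
      (htm.log.neg).ennreal_ofReal
    rw [← hμ_eq, lintegral_withDensity_eq_lintegral_mul lam hρm hmeas]
    have hle : ∀ᵐ x ∂lam,
        (ρ * fun x => ENNReal.ofReal (-(Real.log (t x)))) x ≤ 1 := by
      filter_upwards [Measure.rnDeriv_lt_top μ lam] with x hx
      simp only [Pi.mul_apply]
      rcases eq_or_ne (ρ x) 0 with h0 | h0
      · simp [h0]
      · have htx : 0 < t x := ENNReal.toReal_pos h0 hx.ne
        have hρx : ρ x = ENNReal.ofReal (t x) := (ENNReal.ofReal_toReal hx.ne).symm
        by_cases h1 : 1 ≤ t x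
        · have hz : -(Real.log (t x)) ≤ 0 := neg_nonpos.2 (Real.log_nonneg h1)
          simp [ENNReal.ofReal_eq_zero.2 hz]
        · have hinv : -(Real.log (t x)) ≤ (t x)⁻¹ := by
            rw [← Real.log_inv]
            have := Real.log_le_sub_one_of_pos (inv_pos.2 htx)
            linarith
          have hmul : t x * (-(Real.log (t x))) ≤ 1 := by
            calc t x * (-(Real.log (t x))) ≤ t x * (t x)⁻¹ :=
                  mul_le_mul_of_nonneg_left hinv htx.le
              _ = 1 := mul_inv_cancel₀ htx.ne'
          rw [hρx, ← ENNReal.ofReal_mul htx.le]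
          exact ENNReal.ofReal_le_one.2 hmul
    calc ∫⁻ x, (ρ * fun x => ENNReal.ofReal (-(Real.log (t x)))) x ∂lam
        ≤ ∫⁻ _, 1 ∂lam := lintegral_mono_ae hle
      _ = 1 := by simp
  -- positive part
  have hLbound : ∀ n : ℕ,
      ∫⁻ x, ENNReal.ofReal (max 0 (min (Real.log (t x)) (Real.log n))) ∂μ
        ≤ ENNReal.ofReal (Real.log 2 + B) := by
    intro n
    set f : α → ℝ := fun y => max 1 (min (t y) n) with hf
    have hfm : Measurable f := measurable_const.max (htm.min measurable_const)
    have hf1 : ∀ x, 1 ≤ f x := fun x => le_max_left _ _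
    have hfub : ∀ x, f x ≤ 1 + t x := by
      intro x
      have h1 : min (t x) n ≤ t x := min_le_left _ _
      have h2 : (1:ℝ) ≤ 1 + t x := by linarith [htnn x]
      exact max_le h2 (by linarith)
    have hfC : ∃ C, ∀ x, f x ≤ C := ⟨max 1 n, fun x => max_le_max le_rfl (min_le_right _ _)⟩
    have hkey := hA f hfm hf1 hfC
    have hfint : Integrable f lam := by
      refine integrable_of_bdd hfm (C := max 1 n) fun x => ?_
      rw [abs_of_nonneg (le_trans zero_le_one (hf1 x))]
      exact max_le_max le_rfl (min_le_right _ _)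
    have hfint2 : ∫ y, f y ∂lam ≤ 2 := by
      calc ∫ y, f y ∂lam ≤ ∫ y, (1 + t y) ∂lam :=
            integral_mono hfint ((integrable_const 1).add htint) hfub
        _ = 2 := by rw [integral_add (integrable_const 1) htint, htint1]; simp; norm_num
    have hfpos : (0:ℝ) < ∫ y, f y ∂lam := by
      have := integral_mono (integrable_const (1:ℝ)) hfint hf1
      simp at this; linarith
    have hlog2 : Real.log (∫ y, f y ∂lam) ≤ Real.log 2 := Real.log_le_log hfpos hfint2
    -- pointwise lower bound
    have hptw : ∀ x, max 0 (min (Real.log (t x)) (Real.log n)) ≤ Real.log (f x) := by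
      intro x
      have hlogf0 : 0 ≤ Real.log (f x) := Real.log_nonneg (hf1 x)
      refine max_le hlogf0 ?_
      rcases eq_or_lt_of_le (htnn x) with heq | hpos
      · have htx : t x = 0 := heq.symm
        have hmin : min (Real.log (t x)) (Real.log n) ≤ 0 := by
          rw [htx, Real.log_zero]; exact min_le_left _ _
        exact hmin.trans hlogf0
      · rcases Nat.eq_zero_or_pos n with h0 | h0
        · subst h0
          simp only [Nat.cast_zero, Real.log_zero]
          exact le_trans (min_le_right _ _) hlogf0
        · have hnpos : (0:ℝ) < n := by exact_mod_cast h0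
          have hminpos : 0 < min (t x) n := lt_min hpos hnpos
          have h1 : Real.log (min (t x) (n:ℝ)) ≤ Real.log (f x) :=
            Real.log_le_log hminpos (le_max_right _ _)
          have h2 : Real.log (min (t x) (n:ℝ)) = min (Real.log (t x)) (Real.log n) := by
            rcases le_total (t x) (n:ℝ) with hle | hle
            · rw [min_eq_left hle, min_eq_left (Real.log_le_log hpos hle)]
            · rw [min_eq_right hle, min_eq_right (Real.log_le_log hnpos hle)]
          linarith [h2 ▸ h1]
    have hintmax : Integrable (fun x => max 0 (min (Real.log (t x)) (Real.log n))) μ := by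
      refine integrable_of_bdd (measurable_const.max (htm.log.min measurable_const))
        (C := max 0 (Real.log n)) fun x => ?_
      rw [abs_of_nonneg (le_max_left _ _)]
      exact max_le_max le_rfl (min_le_right _ _)
    have hlogfint : Integrable (fun x => Real.log (f x)) μ := by
      obtain ⟨C, hC⟩ := hfC
      refine integrable_of_bdd hfm.log (C := max |Real.log C| 1) fun x => ?_
      rw [abs_of_nonneg (Real.log_nonneg (hf1 x))]
      exact le_trans (Real.log_le_log (lt_of_lt_of_le one_pos (hf1 x)) (hC x))
        (le_trans (le_abs_self _) (le_max_left _ _))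
    have hmono : ∫ x, max 0 (min (Real.log (t x)) (Real.log n)) ∂μ
        ≤ Real.log 2 + B := by
      calc ∫ x, max 0 (min (Real.log (t x)) (Real.log n)) ∂μ
          ≤ ∫ x, Real.log (f x) ∂μ := integral_mono hintmax hlogfint hptw
        _ ≤ Real.log (∫ y, f y ∂lam) + B := hkey
        _ ≤ Real.log 2 + B := by linarith
    rw [← ofReal_integral_eq_lintegral_ofReal hintmax
      (Filter.Eventually.of_forall fun x => le_max_left _ _)]
    exact ENNReal.ofReal_le_ofReal hmono
  have hpos_fin : ∫⁻ x, ENNReal.ofReal (Real.log (t x)) ∂μ ≤ ENNReal.ofReal (Real.log 2 + B) := by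
    set φ : ℕ → α → ℝ≥0∞ :=
      fun n x => ENNReal.ofReal (max 0 (min (Real.log (t x)) (Real.log n))) with hφ
    have hφm : ∀ n, Measurable (φ n) :=
      fun n => (measurable_const.max (htm.log.min measurable_const)).ennreal_ofReal
    have hφmono : Monotone φ := by
      intro a b hab x
      exact ENNReal.ofReal_le_ofReal (max_le_max le_rfl (min_le_min le_rfl (log_nat_mono hab)))
    have hptw : ∀ x, ENNReal.ofReal (Real.log (t x)) ≤ ⨆ n, φ n x := by
      intro x
      set n : ℕ := ⌈Real.exp (Real.log (t x))⌉₊ with hn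
      have h1 : Real.log (t x) ≤ Real.log n := by
        rw [← Real.log_exp (Real.log (t x))]
        refine Real.log_le_log (Real.exp_pos _) ?_
        exact Nat.le_ceil _
      have h2 : ENNReal.ofReal (Real.log (t x)) ≤ φ n x := by
        refine ENNReal.ofReal_le_ofReal ?_
        rw [min_eq_left h1]
        exact le_max_right _ _
      exact h2.trans (le_iSup (fun n => φ n x) n)
    calc ∫⁻ x, ENNReal.ofReal (Real.log (t x)) ∂μ ≤ ∫⁻ x, ⨆ n, φ n x ∂μ :=
          lintegral_mono hptw
      _ = ⨆ n, ∫⁻ x, φ n x ∂μ := lintegral_iSup hφm hφmono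
      _ ≤ ENNReal.ofReal (Real.log 2 + B) := iSup_le hLbound
  have hint : Integrable (llr μ lam) μ := by
    refine ⟨hgm.aestronglyMeasurable, ?_⟩
    show ∫⁻ x, (‖llr μ lam x‖₊ : ℝ≥0∞) ∂μ < ∞
    calc ∫⁻ x, (‖llr μ lam x‖₊ : ℝ≥0∞) ∂μ
        = ∫⁻ x, (ENNReal.ofReal (Real.log (t x)) + ENNReal.ofReal (-(Real.log (t x)))) ∂μ :=
          lintegral_congr fun x => coe_nnnorm_real _
      _ ≤ ENNReal.ofReal (Real.log 2 + B) + 1 := by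
          rw [lintegral_add_left (htm.log.ennreal_ofReal)]
          exact add_le_add hpos_fin hneg
      _ < ∞ := by finiteness
  refine ⟨hint, ?_⟩
  have hae : ∀ᵐ x ∂μ, 0 < t x := by
    filter_upwards [Measure.rnDeriv_pos hAC,
      (Measure.rnDeriv_lt_top μ lam).filter_mono hAC.ae_le] with x h1 h2
    exact ENNReal.toReal_pos h1.ne' h2.ne
  have hbound : ∀ n : ℕ, ∫ x, min (llr μ lam x) (Real.log ((n:ℝ)+1)) ∂μ
      ≤ (Real.log ((n:ℝ)+2) - Real.log ((n:ℝ)+1)) + B := by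
    intro n
    set N : ℝ := (n:ℝ) + 1 with hN
    have hN1 : (1:ℝ) ≤ N := by simp [hN]
    have hNpos : (0:ℝ) < N := lt_of_lt_of_le one_pos hN1
    set f : α → ℝ := fun y => max 1 (min (N * t y) (N^2)) with hf
    have hfm : Measurable f := measurable_const.max ((htm.const_mul N).min measurable_const)
    have hf1 : ∀ x, 1 ≤ f x := fun x => le_max_left _ _
    have hfC : ∃ C, ∀ x, f x ≤ C := ⟨max 1 (N^2), fun x => max_le_max le_rfl (min_le_right _ _)⟩
    have hkey := hA f hfm hf1 hfC
    have hfub : ∀ x, f x ≤ 1 + N * t x := by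
      intro x
      refine max_le (by nlinarith [htnn x]) (le_trans (min_le_left _ _) (by linarith))
    have hfint : Integrable f lam := by
      refine integrable_of_bdd hfm (C := max 1 (N^2)) fun x => ?_
      rw [abs_of_nonneg (le_trans zero_le_one (hf1 x))]
      exact max_le_max le_rfl (min_le_right _ _)
    have hintub : ∫ y, f y ∂lam ≤ 1 + N := by
      calc ∫ y, f y ∂lam ≤ ∫ y, (1 + N * t y) ∂lam :=
            integral_mono hfint ((integrable_const 1).add (htint.const_mul N)) hfub
        _ = 1 + N := by
            rw [integral_add (integrable_const 1) (htint.const_mul N), integral_const_mul,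
              htint1]
            simp
    have hfpos : (0:ℝ) < ∫ y, f y ∂lam := by
      have := integral_mono (integrable_const (1:ℝ)) hfint hf1
      simp at this; linarith
    have hlogub : Real.log (∫ y, f y ∂lam) ≤ Real.log (1+N) := Real.log_le_log hfpos hintub
    have hptw : ∀ᵐ x ∂μ, Real.log N + min (llr μ lam x) (Real.log N) ≤ Real.log (f x) := by
      filter_upwards [hae] with x hx
      have hmin : 0 < min (N * t x) (N^2) := lt_min (by positivity) (by positivity)
      have h1 : Real.log (min (N * t x) (N^2)) ≤ Real.log (f x) :=
        Real.log_le_log hmin (le_max_right _ _)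
      have h2 : Real.log (min (N * t x) (N^2))
          = min (Real.log (N * t x)) (Real.log (N^2)) := by
        rcases le_total (N * t x) (N^2) with hle | hle
        · rw [min_eq_left hle, min_eq_left (Real.log_le_log (by positivity) hle)]
        · rw [min_eq_right hle, min_eq_right (Real.log_le_log (by positivity) hle)]
      have h3 : Real.log (N * t x) = Real.log N + Real.log (t x) :=
        Real.log_mul hNpos.ne' hx.ne'
      have h4 : Real.log (N^2) = 2 * Real.log N := by
        rw [Real.log_pow]; push_cast; ring
      have h5 : min (Real.log (N * t x)) (Real.log (N^2))
          = Real.log N + min (Real.log (t x)) (Real.log N) := by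
        rw [h3, h4]
        rcases le_total (Real.log (t x)) (Real.log N) with hle | hle
        · rw [min_eq_left (by linarith), min_eq_left hle]
        · rw [min_eq_right (by linarith), min_eq_right hle]; ring
      rw [h2, h5] at h1
      rw [hgdef x]
      linarith
    have hlogNnn : 0 ≤ Real.log N := Real.log_nonneg hN1
    have hminint : Integrable (fun x => min (llr μ lam x) (Real.log N)) μ := by
      refine (hint.abs.add (integrable_const (Real.log N))).mono'
        (hgm.min measurable_const).aestronglyMeasurable
        (Filter.Eventually.of_forall fun x => ?_)
      simp only [Pi.add_apply]
      rw [Real.norm_eq_abs]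
      rcases le_total (llr μ lam x) (Real.log N) with hle | hle
      · rw [min_eq_left hle]
        have : |llr μ lam x| ≤ |llr μ lam x| + Real.log N := by linarith
        exact this
      · rw [min_eq_right hle, abs_of_nonneg hlogNnn]
        have : 0 ≤ |llr μ lam x| := abs_nonneg _
        linarith
    have hlogfint : Integrable (fun x => Real.log (f x)) μ := by
      refine integrable_of_bdd hfm.log (C := max |Real.log (max 1 (N^2))| 1) fun x => ?_
      rw [abs_of_nonneg (Real.log_nonneg (hf1 x))]
      refine le_trans (Real.log_le_log (lt_of_lt_of_le one_pos (hf1 x))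
        (max_le_max le_rfl (min_le_right _ _))) ?_
      exact le_trans (le_abs_self _) (le_max_left _ _)
    have hmono := integral_mono_ae ((integrable_const (Real.log N)).add hminint) hlogfint hptw
    simp only [Pi.add_apply] at hmono
    rw [integral_add (integrable_const _) hminint, integral_const] at hmono
    simp only [probReal_univ, one_smul] at hmono
    have hfinal : ∫ x, min (llr μ lam x) (Real.log N) ∂μ
        ≤ Real.log (1+N) - Real.log N + B := by linarith
    have hcast : (1:ℝ) + N = (n:ℝ) + 2 := by rw [hN]; ring
    rw [hcast] at hfinal
    simpa [hN] using hfinal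
  have htendL : Tendsto (fun n : ℕ => ∫ x, min (llr μ lam x) (Real.log ((n:ℝ)+1)) ∂μ)
      atTop (𝓝 (∫ x, llr μ lam x ∂μ)) := by
    refine tendsto_integral_of_dominated_convergence (fun x => |llr μ lam x|)
      (fun n => (hgm.min measurable_const).aestronglyMeasurable) hint.abs
      (fun n => Filter.Eventually.of_forall fun x => ?_)
      (Filter.Eventually.of_forall fun x => ?_)
    · have hlogpos : 0 ≤ Real.log ((n:ℝ)+1) := Real.log_nonneg (by push_cast; linarith)
      rw [Real.norm_eq_abs]
      rcases le_total (llr μ lam x) (Real.log ((n:ℝ)+1)) with hle | hle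
      · rw [min_eq_left hle]
      · rw [min_eq_right hle, abs_of_nonneg hlogpos]
        exact le_trans hle (le_abs_self _)
    · refine tendsto_atTop_of_eventually_const (i₀ := ⌈Real.exp (llr μ lam x)⌉₊)
        fun n hn => ?_
      have h1 : Real.exp (llr μ lam x) ≤ (n:ℝ) := (Nat.ceil_le.mp hn)
      have h2 : llr μ lam x ≤ Real.log ((n:ℝ)+1) := by
        rw [← Real.log_exp (llr μ lam x)]
        exact Real.log_le_log (Real.exp_pos _) (by linarith)
      exact min_eq_left h2
  have htendR : Tendsto (fun n : ℕ => (Real.log ((n:ℝ)+2) - Real.log ((n:ℝ)+1)) + B)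
      atTop (𝓝 B) := by
    have e : ∀ n : ℕ, Real.log ((n:ℝ)+2) - Real.log ((n:ℝ)+1)
        = Real.log (1 + 1/((n:ℝ)+1)) := by
      intro n
      have h1 : ((n:ℝ)+1) ≠ 0 := by positivity
      rw [← Real.log_div (by positivity) h1]
      congr 1
      field_simp
      ring
    have h2 : Tendsto (fun n : ℕ => 1 + 1/((n:ℝ)+1)) atTop (𝓝 1) := by
      have := tendsto_one_div_add_atTop_nhds_zero_nat (𝕜 := ℝ)
      have h := (tendsto_const_nhds : Tendsto (fun _ : ℕ => (1:ℝ)) atTop (𝓝 1)).add this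
      simpa using h
    have h3 : Tendsto (fun n : ℕ => Real.log (1 + 1/((n:ℝ)+1))) atTop (𝓝 0) := by
      have := ((Real.continuousAt_log (by norm_num : (1:ℝ) ≠ 0)).tendsto).comp h2
      simpa [Function.comp_def] using this
    have h4 : Tendsto (fun n : ℕ => (Real.log ((n:ℝ)+2) - Real.log ((n:ℝ)+1)) + B)
        atTop (𝓝 (0 + B)) := by
      exact Tendsto.add (h3.congr fun n => (e n).symm) tendsto_const_nhds
    simpa using h4
  exact le_of_tendsto_of_tendsto' htendL htendR hbound
lemma lemA {E : Type*} [NormedAddCommGroup E] [MeasurableSpace E] [BorelSpace E]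
    [SecondCountableTopology E]
    (κ : Kernel E E) [IsMarkovKernel κ] {c : ℝ} (hc : 0 ≤ c)
    (h : ∀ f : E → ℝ, (Measurable f ∧ ∃ C : ℝ, ∀ x, |f x| ≤ C) → (∀ y, 1 ≤ f y) →
      ∀ x xbar : E,
        ∫ y, Real.log (f y) ∂(κ x) ≤ Real.log (∫ y, f y ∂(κ xbar)) + c * ‖x - xbar‖ ^ 2)
    (ν νbar : Measure E) [IsProbabilityMeasure ν] [IsProbabilityMeasure νbar]
    (π : Measure (E × E)) (hπ1 : π.map Prod.fst = ν) (hπ2 : π.map Prod.snd = νbar)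
    (hcost : ∫⁻ p, (‖p.1 - p.2‖₊ : ℝ≥0∞) ^ 2 ∂π ≠ ∞)
    (f : E → ℝ) (hfm : Measurable f) (hf1 : ∀ x, 1 ≤ f x) (hfC : ∃ C, ∀ x, f x ≤ C) :
    ∫ y, Real.log (f y) ∂(ν.bind fun x => κ x)
      ≤ Real.log (∫ y, f y ∂(νbar.bind fun x => κ x))
        + c * (∫⁻ p, (‖p.1 - p.2‖₊ : ℝ≥0∞) ^ 2 ∂π).toReal := by
  obtain ⟨C, hC⟩ := hfC
  set D : ℝ := max C 1 with hD
  have hfD : ∀ x, |f x| ≤ D := fun x => abs_le.2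
    ⟨le_trans (by simp [hD]; linarith [le_max_right C (1:ℝ)]) (hf1 x),
     le_trans (hC x) (le_max_left _ _)⟩
  have hD1 : (1:ℝ) ≤ D := le_max_right _ _
  have hfpos : ∀ x, (0:ℝ) < f x := fun x => lt_of_lt_of_le one_pos (hf1 x)
  have hfd : ∀ x, f x ≤ D := fun x => le_trans (le_abs_self _) (hfD x)
  haveI : IsProbabilityMeasure π := by
    constructor
    have : π Set.univ = (π.map Prod.fst) Set.univ := by
      rw [Measure.map_apply measurable_fst MeasurableSet.univ]; rfl
    rw [this, hπ1, measure_univ]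
  -- integrability of f and log f on any finite measure
  have hfint : ∀ (μ' : Measure E) [IsFiniteMeasure μ'], Integrable f μ' := by
    intro μ' _; exact integrable_of_bdd hfm hfD
  have hlogf_nn : ∀ x, 0 ≤ Real.log (f x) := fun x => Real.log_nonneg (hf1 x)
  have hlogf_ub : ∀ x, Real.log (f x) ≤ Real.log D := fun x => Real.log_le_log (hfpos x) (hfd x)
  have hlogfD : ∀ x, |Real.log (f x)| ≤ Real.log D := fun x => by
    rw [abs_of_nonneg (hlogf_nn x)]; exact hlogf_ub x
  have hlogfint : ∀ (μ' : Measure E) [IsFiniteMeasure μ'], Integrable (fun x => Real.log (f x)) μ' := by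
    intro μ' _; exact integrable_of_bdd hfm.log hlogfD
  -- the lintegral-valued functions
  set Lf : E → ℝ≥0∞ := fun y => ENNReal.ofReal (Real.log (f y)) with hLf
  have hLfm : Measurable Lf := hfm.log.ennreal_ofReal
  set Ψ : E → ℝ≥0∞ := fun x => ∫⁻ y, ENNReal.ofReal (f y) ∂κ x with hΨ
  have hΨm : Measurable Ψ := hfm.ennreal_ofReal.lintegral_kernel
  set H : E → ℝ := fun x => ∫ y, f y ∂κ x with hH
  have hHeq : ∀ x, H x = (Ψ x).toReal := fun x =>
    integral_eq_lintegral_of_nonneg_ae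
      (Filter.Eventually.of_forall fun y => le_trans zero_le_one (hf1 y))
      hfm.aestronglyMeasurable
  have hHm : Measurable H := by
    have : H = fun x => (Ψ x).toReal := funext hHeq
    rw [this]; exact hΨm.ennreal_toReal
  have hH1 : ∀ x, 1 ≤ H x := by
    intro x
    have := integral_mono (integrable_const (1:ℝ)) (hfint (κ x)) hf1
    simpa using this
  have hHD : ∀ x, H x ≤ D := by
    intro x
    have := integral_mono (hfint (κ x)) (integrable_const D) hfd
    simpa using this
  set G : E → ℝ := fun x => Real.log (H x) with hG
  have hGm : Measurable G := hHm.log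
  have hGnn : ∀ x, 0 ≤ G x := fun x => Real.log_nonneg (hH1 x)
  have hGub : ∀ x, G x ≤ Real.log D := fun x =>
    Real.log_le_log (lt_of_lt_of_le one_pos (hH1 x)) (hHD x)
  set Φ : E → ℝ≥0∞ := fun x => ∫⁻ y, Lf y ∂κ x with hΦ
  have hΦm : Measurable Φ := hLfm.lintegral_kernel
  have hΦeq : ∀ x, Φ x = ENNReal.ofReal (∫ y, Real.log (f y) ∂κ x) := fun x =>
    (ofReal_integral_eq_lintegral_ofReal (hlogfint (κ x))
      (Filter.Eventually.of_forall hlogf_nn)).symm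
  set cost : ℝ≥0∞ := ∫⁻ p, (‖p.1 - p.2‖₊ : ℝ≥0∞) ^ 2 ∂π with hcostdef
  have hsqm : Measurable fun p : E × E => ((‖p.1 - p.2‖₊ : ℝ≥0∞)) ^ 2 :=
    ((measurable_fst.sub measurable_snd).nnnorm.coe_nnreal_ennreal).pow_const 2
  -- pointwise bound
  have hkey : ∀ p : E × E,
      Φ p.1 ≤ ENNReal.ofReal (G p.2) + ENNReal.ofReal c * (‖p.1 - p.2‖₊ : ℝ≥0∞) ^ 2 := by
    intro p
    rw [hΦeq]
    calc ENNReal.ofReal (∫ y, Real.log (f y) ∂κ p.1)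
        ≤ ENNReal.ofReal (G p.2 + c * ‖p.1 - p.2‖ ^ 2) :=
          ENNReal.ofReal_le_ofReal (h f ⟨hfm, D, hfD⟩ hf1 p.1 p.2)
      _ = ENNReal.ofReal (G p.2) + ENNReal.ofReal (c * ‖p.1 - p.2‖ ^ 2) :=
          ENNReal.ofReal_add (hGnn _) (by positivity)
      _ = ENNReal.ofReal (G p.2) + ENNReal.ofReal c * (‖p.1 - p.2‖₊ : ℝ≥0∞) ^ 2 := by
          rw [ENNReal.ofReal_mul hc, ENNReal.ofReal_pow (norm_nonneg _),
            show ENNReal.ofReal ‖p.1 - p.2‖ = (‖p.1 - p.2‖₊ : ℝ≥0∞) from ofReal_norm _]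
  -- main chain
  have hbind1 : ∫⁻ y, Lf y ∂(ν.bind fun x => κ x) = ∫⁻ x, Φ x ∂ν :=
    Measure.lintegral_bind (Kernel.measurable κ).aemeasurable hLfm.aemeasurable
  have hmap1 : ∫⁻ x, Φ x ∂ν = ∫⁻ p, Φ p.1 ∂π := by
    rw [← hπ1, lintegral_map hΦm measurable_fst]
  have hchain : ∫⁻ y, Lf y ∂(ν.bind fun x => κ x)
      ≤ ENNReal.ofReal (∫ x, G x ∂νbar) + ENNReal.ofReal c * cost := by
    rw [hbind1, hmap1]
    calc ∫⁻ p, Φ p.1 ∂π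
        ≤ ∫⁻ p, (ENNReal.ofReal (G p.2) + ENNReal.ofReal c * (‖p.1 - p.2‖₊ : ℝ≥0∞) ^ 2) ∂π :=
          lintegral_mono hkey
      _ = ∫⁻ p, ENNReal.ofReal (G p.2) ∂π + ENNReal.ofReal c * cost := by
          rw [lintegral_add_left (show Measurable fun p : E × E => ENNReal.ofReal (G p.2)
              from (hGm.comp measurable_snd).ennreal_ofReal),
            lintegral_const_mul _ hsqm]
      _ = ENNReal.ofReal (∫ x, G x ∂νbar) + ENNReal.ofReal c * cost := by
          congr 1
          have e1 : ENNReal.ofReal (∫ x, G x ∂νbar) = ∫⁻ x, ENNReal.ofReal (G x) ∂νbar :=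
            ofReal_integral_eq_lintegral_ofReal (integrable_of_bdd hGm
              (C := Real.log D) fun x => by rw [abs_of_nonneg (hGnn x)]; exact hGub x)
              (Filter.Eventually.of_forall hGnn)
          rw [e1, ← hπ2, lintegral_map hGm.ennreal_ofReal measurable_snd]
  have hGL : ∫ y, Real.log (f y) ∂(ν.bind fun x => κ x)
      ≤ ∫ x, G x ∂νbar + c * cost.toReal := by
    have hL : ∫ y, Real.log (f y) ∂(ν.bind fun x => κ x)
        = (∫⁻ y, Lf y ∂(ν.bind fun x => κ x)).toReal :=
      integral_eq_lintegral_of_nonneg_ae (Filter.Eventually.of_forall hlogf_nn)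
        hfm.log.aestronglyMeasurable
    have hfin : ENNReal.ofReal (∫ x, G x ∂νbar) + ENNReal.ofReal c * cost ≠ ∞ := by
      refine ENNReal.add_ne_top.2 ⟨ENNReal.ofReal_ne_top, ?_⟩
      exact ENNReal.mul_ne_top ENNReal.ofReal_ne_top hcost
    have := ENNReal.toReal_mono hfin hchain
    rw [← hL] at this
    refine le_trans this (le_of_eq ?_)
    rw [ENNReal.toReal_add ENNReal.ofReal_ne_top
        (ENNReal.mul_ne_top ENNReal.ofReal_ne_top hcost),
      ENNReal.toReal_ofReal (integral_nonneg hGnn), ENNReal.toReal_mul,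
      ENNReal.toReal_ofReal hc]
  -- Jensen
  have hjensen : ∫ x, G x ∂νbar ≤ Real.log (∫ x, H x ∂νbar) :=
    jensen_log hHm hHD hH1
  -- identify ∫ H dνbar with ∫ f dλ
  have hHeq2 : ∫ x, H x ∂νbar = ∫ y, f y ∂(νbar.bind fun x => κ x) := by
    have h1 : ∫ y, f y ∂(νbar.bind fun x => κ x)
        = (∫⁻ y, ENNReal.ofReal (f y) ∂(νbar.bind fun x => κ x)).toReal :=
      integral_eq_lintegral_of_nonneg_ae
        (Filter.Eventually.of_forall fun y => le_trans zero_le_one (hf1 y))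
        hfm.aestronglyMeasurable
    have h2 : ∫⁻ y, ENNReal.ofReal (f y) ∂(νbar.bind fun x => κ x) = ∫⁻ x, Ψ x ∂νbar :=
      Measure.lintegral_bind (Kernel.measurable κ).aemeasurable hfm.ennreal_ofReal.aemeasurable
    have h3 : ∫ x, H x ∂νbar = (∫⁻ x, Ψ x ∂νbar).toReal := by
      rw [show H = fun x => (Ψ x).toReal from funext hHeq]
      refine integral_toReal hΨm.aemeasurable ?_
      refine Filter.Eventually.of_forall fun x => ?_
      calc Ψ x ≤ ∫⁻ _, ENNReal.ofReal D ∂κ x :=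
            lintegral_mono fun y => ENNReal.ofReal_le_ofReal (hfd y)
        _ = ENNReal.ofReal D := by simp
        _ < ∞ := ENNReal.ofReal_lt_top
    rw [h1, h2, h3]
  calc ∫ y, Real.log (f y) ∂(ν.bind fun x => κ x)
      ≤ ∫ x, G x ∂νbar + c * cost.toReal := hGL
    _ ≤ Real.log (∫ x, H x ∂νbar) + c * cost.toReal := by linarith
    _ = Real.log (∫ y, f y ∂(νbar.bind fun x => κ x)) + c * cost.toReal := by rw [hHeq2]

/-- If a Markov kernel `κ` on `ℝ^m` satisfies the log-Harnack inequality with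
constant `c`, then `Ent(νκ | ν̄κ) ≤ c W₂(ν, ν̄)²` for all probability measures `ν, ν̄` with
finite second moments. -/
theorem statement_5 (m : ℕ)
    (κ : Kernel (EuclideanSpace ℝ (Fin m)) (EuclideanSpace ℝ (Fin m))) [IsMarkovKernel κ]
    (c : ℝ) (hc : 0 < c)
    (h : ∀ f : EuclideanSpace ℝ (Fin m) → ℝ, BddMeasurableFn f → (∀ y, 1 ≤ f y) →
      ∀ x xbar : EuclideanSpace ℝ (Fin m),
        ∫ y, Real.log (f y) ∂(κ x) ≤ Real.log (∫ y, f y ∂(κ xbar)) + c * ‖x - xbar‖ ^ 2) :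
    ∀ ν νbar : Measure (EuclideanSpace ℝ (Fin m)), MemP2 ν → MemP2 νbar →
      relEnt (ν.bind fun x => κ x) (νbar.bind fun x => κ x)
        ≤ ENNReal.ofReal c * W2sq ν νbar := by
  intro ν νbar hν hνbar
  haveI hνP := hν.1
  haveI hνbarP := hνbar.1
  set E := EuclideanSpace ℝ (Fin m)
  set μ : Measure E := ν.bind fun x => κ x with hμdef
  set lam : Measure E := νbar.bind fun x => κ x with hlamdef
  haveI : IsProbabilityMeasure μ := by
    constructor
    rw [hμdef, Measure.bind_apply MeasurableSet.univ (Kernel.measurable κ).aemeasurable]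
    simp
  haveI : IsProbabilityMeasure lam := by
    constructor
    rw [hlamdef, Measure.bind_apply MeasurableSet.univ (Kernel.measurable κ).aemeasurable]
    simp
  set a : ℝ≥0∞ := ENNReal.ofReal c with hadef
  have ha0 : a ≠ 0 := by
    simp only [hadef, ne_eq, ENNReal.ofReal_eq_zero, not_le]
    exact hc
  have hatop : a ≠ ∞ := ENNReal.ofReal_ne_top
  have key : ∀ π : Measure (E × E), IsCoupling π ν νbar →
      relEnt μ lam ≤ a * ∫⁻ p, (‖p.1 - p.2‖₊ : ℝ≥0∞) ^ 2 ∂π := by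
    intro π hπ
    by_cases hcost : (∫⁻ p, (‖p.1 - p.2‖₊ : ℝ≥0∞) ^ 2 ∂π) = ∞
    · rw [hcost, ENNReal.mul_top ha0]
      exact le_top
    · set K : ℝ := (∫⁻ p, (‖p.1 - p.2‖₊ : ℝ≥0∞) ^ 2 ∂π).toReal with hK
      set B : ℝ := c * K with hB
      have hBnn : 0 ≤ B := mul_nonneg hc.le ENNReal.toReal_nonneg
      have hA : ∀ f : E → ℝ, Measurable f → (∀ x, 1 ≤ f x) → (∃ C, ∀ x, f x ≤ C) →
          ∫ y, Real.log (f y) ∂μ ≤ Real.log (∫ y, f y ∂lam) + B :=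
        fun f hfm hf1 hfC =>
          lemA κ hc.le h ν νbar π hπ.1 hπ.2 hcost f hfm hf1 hfC
      have hAC : μ ≪ lam := ac_of_logHarnack hA
      obtain ⟨hint, hle⟩ := llr_integrable_and_bound hBnn hAC hA
      rw [relEnt, if_pos ⟨hAC, hint⟩]
      calc ENNReal.ofReal (∫ x, llr μ lam x ∂μ) ≤ ENNReal.ofReal B :=
            ENNReal.ofReal_le_ofReal hle
        _ = a * ENNReal.ofReal K := by rw [hB, ENNReal.ofReal_mul hc.le]
        _ = a * ∫⁻ p, (‖p.1 - p.2‖₊ : ℝ≥0∞) ^ 2 ∂π := by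
            rw [hK, ENNReal.ofReal_toReal hcost]
  have hdiv : relEnt μ lam / a ≤ W2sq ν νbar := by
    rw [W2sq]
    refine le_iInf₂ fun π hπ => ?_
    rw [ENNReal.div_le_iff_le_mul (Or.inl ha0) (Or.inl hatop)]
    calc relEnt μ lam ≤ a * ∫⁻ p, (‖p.1 - p.2‖₊ : ℝ≥0∞) ^ 2 ∂π := key π hπ
      _ = (∫⁻ p, (‖p.1 - p.2‖₊ : ℝ≥0∞) ^ 2 ∂π) * a := mul_comm _ _
  calc relEnt μ lam = a * (relEnt μ lam / a) := (ENNReal.mul_div_cancel ha0 hatop).symm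
    _ ≤ a * W2sq ν νbar := mul_le_mul_right hdiv a
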